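/- Fix W, W̃ ∈ ℂ^{n×n} and ε ∈ (0, 2/3), and suppose W̃ is a complex ε-approximation of W. Let F ⊆ [n] be such that I_{|F|} − W_{FF} and I_{|F|} − W̃_{FF} are invertible, and let C = [n] \ F. Then I_{|C|} − Sc(I_n − W̃, C) is a complex ε/(1 − 3ε/2)-approximation of I_{|C|} − Sc(I_n − W, C). -/

import Mathlib

open Matrix

noncomputable section

/-- The sesquilinear form `x* A y`. -/
def sesq {m : Type*} [Fintype m] (A : Matrix m m ℂ) (x y : m → ℂ) : ℂ :=
  star x ⬝ᵥ (A *ᵥ y)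

/-- The squared Euclidean norm of a complex vector. -/
def vnormSq {m : Type*} [Fintype m] (x : m → ℂ) : ℝ :=
  ∑ i, Complex.normSq (x i)

/-- `W̃` is a *complex ε-approximation* of `W`. -/
def ComplexApprox {m : Type*} [Fintype m] (ε : ℝ) (W Wt : Matrix m m ℂ) : Prop :=
  ∀ x y : m → ℂ,
    ‖sesq (W - Wt) x y‖ ≤
      ε / 2 * (vnormSq x + vnormSq y - (sesq W x x + sesq W y y).re)

/-- The Schur complement `Sc(M, C) = M_CC − M_CF M_FF⁻¹ M_FC` of `M` onto the
set `C = {i | ¬ p i}`, where `F = {i | p i}`. -/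
def schurC {n : ℕ} (M : Matrix (Fin n) (Fin n) ℂ) (p : Fin n → Prop)
    [DecidablePred p] : Matrix {i : Fin n // ¬ p i} {i : Fin n // ¬ p i} ℂ :=
  M.submatrix (fun i : {i : Fin n // ¬ p i} => i.1) (fun j : {j : Fin n // ¬ p j} => j.1) -
    M.submatrix (fun i : {i : Fin n // ¬ p i} => i.1) (fun j : {j : Fin n // p j} => j.1) *
      (M.submatrix (fun i : {i : Fin n // p i} => i.1) (fun j : {j : Fin n // p j} => j.1))⁻¹ *
      M.submatrix (fun i : {i : Fin n // p i} => i.1) (fun j : {j : Fin n // ¬ p j} => j.1)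

lemma sesq_sub {m : Type*} [Fintype m] (A B : Matrix m m ℂ) (x y : m → ℂ) :
    sesq (A - B) x y = sesq A x y - sesq B x y := by
  simp [sesq, sub_mulVec, dotProduct_sub]

lemma sesq_one_self {m : Type*} [Fintype m] [DecidableEq m] (x : m → ℂ) :
    sesq 1 x x = (vnormSq x : ℂ) := by
  simp only [sesq, vnormSq, one_mulVec, dotProduct, Pi.star_apply]
  push_cast
  refine Finset.sum_congr rfl fun i _ => ?_
  rw [← Complex.mul_conj (x i), mul_comm]
  rfl

lemma vnormSq_comp_equiv {m m' : Type*} [Fintype m] [Fintype m'] (e : m' ≃ m) (x : m → ℂ) :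
    vnormSq (x ∘ e) = vnormSq x := by
  simpa [vnormSq] using Fintype.sum_equiv e (fun i => Complex.normSq (x (e i)))
    (fun i => Complex.normSq (x i)) (fun i => rfl)

lemma sesq_submatrix {m m' : Type*} [Fintype m] [Fintype m'] (e : m' ≃ m)
    (M : Matrix m m ℂ) (x y : m' → ℂ) :
    sesq (M.submatrix e e) x y = sesq M (x ∘ e.symm) (y ∘ e.symm) := by
  simp only [sesq, submatrix_mulVec_equiv, dotProduct]
  exact Fintype.sum_equiv e _ _ (fun i => by simp)

lemma star_sum_elim {F C : Type*} (a : F → ℂ) (b : C → ℂ) :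
    star (Sum.elim a b) = Sum.elim (star a) (star b) := by
  ext i; cases i <;> rfl

lemma dotProduct_sum_elim_star {F C : Type*} [Fintype F] [Fintype C]
    (a c : F → ℂ) (b d : C → ℂ) :
    star (Sum.elim a b) ⬝ᵥ Sum.elim c d = star a ⬝ᵥ c + star b ⬝ᵥ d := by
  rw [star_sum_elim]; exact sumElim_dotProduct_sumElim _ _ _ _

/-- Harmonic extension. -/
lemma mulVec_harmonic {F C : Type*} [Fintype F] [Fintype C] [DecidableEq F]
    (A : Matrix F F ℂ) (B : Matrix F C ℂ) (Cm : Matrix C F ℂ) (D : Matrix C C ℂ)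
    (hA : IsUnit A) (x : C → ℂ) :
    fromBlocks A B Cm D *ᵥ Sum.elim (-(A⁻¹ *ᵥ (B *ᵥ x))) x
      = Sum.elim (0 : F → ℂ) ((D - Cm * A⁻¹ * B) *ᵥ x) := by
  have hd : IsUnit A.det := (Matrix.isUnit_iff_isUnit_det _).mp hA
  have h1 : A *ᵥ -(A⁻¹ *ᵥ (B *ᵥ x)) + B *ᵥ x = (0 : F → ℂ) := by
    rw [mulVec_neg, mulVec_mulVec, mulVec_mulVec, Matrix.mul_nonsing_inv _ hd, Matrix.one_mul]
    ring
  have h2 : Cm *ᵥ -(A⁻¹ *ᵥ (B *ᵥ x)) + D *ᵥ x = (D - Cm * A⁻¹ * B) *ᵥ x := by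
    rw [mulVec_neg, mulVec_mulVec, mulVec_mulVec, sub_mulVec, Matrix.mul_assoc]
    ring
  rw [fromBlocks_mulVec, Sum.elim_comp_inl, Sum.elim_comp_inr, h1, h2]

/-- Adjoint harmonic extension. -/
lemma mulVec_adj_harmonic {F C : Type*} [Fintype F] [Fintype C] [DecidableEq F]
    (A : Matrix F F ℂ) (B : Matrix F C ℂ) (Cm : Matrix C F ℂ) (D : Matrix C C ℂ)
    (hA : IsUnit A) (y : C → ℂ) :
    (fromBlocks A B Cm D)ᴴ *ᵥ Sum.elim (-((Aᴴ)⁻¹ *ᵥ (Cmᴴ *ᵥ y))) y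
      = Sum.elim (0 : F → ℂ) ((D - Cm * A⁻¹ * B)ᴴ *ᵥ y) := by
  rw [fromBlocks_conjTranspose, mulVec_harmonic Aᴴ Cmᴴ Bᴴ Dᴴ ((isUnit_conjTranspose A).mpr hA) y]
  rw [conjTranspose_sub, conjTranspose_mul, conjTranspose_mul, conjTranspose_nonsing_inv,
    Matrix.mul_assoc]

/-- If `M *ᵥ v = Sum.elim 0 (T *ᵥ z)`, then `sesq M (Sum.elim w₁ w₂) v = sesq T w₂ z`. -/
lemma sesq_of_image {F C : Type*} [Fintype F] [Fintype C]
    (M : Matrix (F ⊕ C) (F ⊕ C) ℂ) (v : F ⊕ C → ℂ) (T : Matrix C C ℂ) (z : C → ℂ)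
    (hv : M *ᵥ v = Sum.elim (0 : F → ℂ) (T *ᵥ z)) (w₁ : F → ℂ) (w₂ : C → ℂ) :
    sesq M (Sum.elim w₁ w₂) v = sesq T w₂ z := by
  rw [sesq, hv, dotProduct_sum_elim_star]; simp [sesq]

/-- If `Mᴴ *ᵥ u = Sum.elim 0 (Tᴴ *ᵥ y)`, then `sesq M u (Sum.elim v₁ v₂) = sesq T y v₂`. -/
lemma sesq_of_adjoint_image {F C : Type*} [Fintype F] [Fintype C]
    (M : Matrix (F ⊕ C) (F ⊕ C) ℂ) (u : F ⊕ C → ℂ) (T : Matrix C C ℂ) (y : C → ℂ)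
    (hu : Mᴴ *ᵥ u = Sum.elim (0 : F → ℂ) (Tᴴ *ᵥ y)) (v₁ : F → ℂ) (v₂ : C → ℂ) :
    sesq M u (Sum.elim v₁ v₂) = sesq T y v₂ := by
  have h1 : star u ᵥ* M = star (Mᴴ *ᵥ u) := by rw [star_mulVec, conjTranspose_conjTranspose]
  rw [sesq, dotProduct_mulVec, h1, hu, star_sum_elim, sumElim_dotProduct_sumElim]
  simp [sesq, star_mulVec, dotProduct_mulVec]


set_option maxHeartbeats 2000000 in
/-- Complex ε-approximation (for `ε ∈ (0, 2/3)`) is preserved,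
with parameter `ε/(1 − 3ε/2)`, by taking Schur complements:
`I − Sc(I − W̃, C)` approximates `I − Sc(I − W, C)`. -/
theorem schur_preserves_complex_approx {n : ℕ} (ε : ℝ) (h0 : 0 < ε) (h1 : ε < 2 / 3)
    (W Wt : Matrix (Fin n) (Fin n) ℂ) (p : Fin n → Prop) [DecidablePred p]
    (hW : IsUnit ((1 : Matrix {i : Fin n // p i} {i : Fin n // p i} ℂ) -
      W.submatrix (fun i : {i : Fin n // p i} => i.1) (fun j : {j : Fin n // p j} => j.1)))
    (hWt : IsUnit ((1 : Matrix {i : Fin n // p i} {i : Fin n // p i} ℂ) -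
      Wt.submatrix (fun i : {i : Fin n // p i} => i.1) (fun j : {j : Fin n // p j} => j.1)))
    (h : ComplexApprox ε W Wt) :
    ComplexApprox (ε / (1 - 3 * ε / 2))
      (1 - schurC (1 - W) p) (1 - schurC (1 - Wt) p) := by
  classical
  set F := {i : Fin n // p i}
  set C := {i : Fin n // ¬ p i}
  let e : F ⊕ C ≃ Fin n := Equiv.sumCompl p
  set M : Matrix (Fin n) (Fin n) ℂ := 1 - W with hM
  set Mt : Matrix (Fin n) (Fin n) ℂ := 1 - Wt with hMt
  let N : Matrix (F ⊕ C) (F ⊕ C) ℂ := M.submatrix e e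
  let Nt : Matrix (F ⊕ C) (F ⊕ C) ℂ := Mt.submatrix e e
  let A := N.toBlocks₁₁; let B := N.toBlocks₁₂; let Cm := N.toBlocks₂₁; let D := N.toBlocks₂₂
  let At := Nt.toBlocks₁₁; let Bt := Nt.toBlocks₁₂; let Ct := Nt.toBlocks₂₁; let Dt := Nt.toBlocks₂₂
  let S : Matrix C C ℂ := D - Cm * A⁻¹ * B
  let St : Matrix C C ℂ := Dt - Ct * At⁻¹ * Bt
  have hNb : N = fromBlocks A B Cm D := (fromBlocks_toBlocks N).symm
  have hNtb : Nt = fromBlocks At Bt Ct Dt := (fromBlocks_toBlocks Nt).symm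
  -- the F-block of N is the matrix assumed invertible
  have hA : IsUnit A := by
    convert hW using 1
    ext i j
    simp [A, N, Matrix.toBlocks₁₁, M, e, Matrix.one_apply, Sub.sub, Subtype.ext_iff, Equiv.sumCompl_apply_inl]
    try rfl
  have hAt : IsUnit At := by
    convert hWt using 1
    ext i j
    simp [At, Nt, Matrix.toBlocks₁₁, Mt, e, Matrix.one_apply, Sub.sub, Subtype.ext_iff, Equiv.sumCompl_apply_inl]
    try rfl
  -- the Schur complements agree
  have hS : schurC M p = S := by
    have h22 : M.submatrix (fun i : C => i.1) (fun j : C => j.1) = D := by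
      ext i j; simp [D, N, Matrix.toBlocks₂₂, e, Equiv.sumCompl_apply_inr]; try rfl
    have h21 : M.submatrix (fun i : C => i.1) (fun j : F => j.1) = Cm := by
      ext i j; simp [Cm, N, Matrix.toBlocks₂₁, e, Equiv.sumCompl_apply_inl, Equiv.sumCompl_apply_inr]; try rfl
    have h11 : M.submatrix (fun i : F => i.1) (fun j : F => j.1) = A := by
      ext i j; simp [A, N, Matrix.toBlocks₁₁, e, Equiv.sumCompl_apply_inl]; try rfl
    have h12 : M.submatrix (fun i : F => i.1) (fun j : C => j.1) = B := by
      ext i j; simp [B, N, Matrix.toBlocks₁₂, e, Equiv.sumCompl_apply_inl, Equiv.sumCompl_apply_inr]; try rfl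
    rw [schurC, h22, h21, h11, h12]
  have hSt : schurC Mt p = St := by
    have h22 : Mt.submatrix (fun i : C => i.1) (fun j : C => j.1) = Dt := by
      ext i j; simp [Dt, Nt, Matrix.toBlocks₂₂, e, Equiv.sumCompl_apply_inr]; try rfl
    have h21 : Mt.submatrix (fun i : C => i.1) (fun j : F => j.1) = Ct := by
      ext i j; simp [Ct, Nt, Matrix.toBlocks₂₁, e, Equiv.sumCompl_apply_inl, Equiv.sumCompl_apply_inr]; try rfl
    have h11 : Mt.submatrix (fun i : F => i.1) (fun j : F => j.1) = At := by
      ext i j; simp [At, Nt, Matrix.toBlocks₁₁, e, Equiv.sumCompl_apply_inl]; try rfl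
    have h12 : Mt.submatrix (fun i : F => i.1) (fun j : C => j.1) = Bt := by
      ext i j; simp [Bt, Nt, Matrix.toBlocks₁₂, e, Equiv.sumCompl_apply_inl, Equiv.sumCompl_apply_inr]; try rfl
    rw [schurC, h22, h21, h11, h12]
  -- transported hypothesis
  have hH : ∀ u v : F ⊕ C → ℂ, ‖sesq (Nt - N) u v‖ ≤
      ε / 2 * ((sesq N u u).re + (sesq N v v).re) := by
    intro u v
    have key := h (u ∘ e.symm) (v ∘ e.symm)
    have hsub : W - Wt = Mt - M := by rw [hM, hMt]; abel
    have hmm : (Mt - M).submatrix e e = Nt - N := by ext i j; simp [N, Nt]; try rfl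
    have hl : sesq (W - Wt) (u ∘ e.symm) (v ∘ e.symm) = sesq (Nt - N) u v := by
      rw [hsub, ← hmm, sesq_submatrix]
    have hNu : ∀ w : F ⊕ C → ℂ, (sesq N w w).re = vnormSq (w ∘ e.symm) -
        (sesq W (w ∘ e.symm) (w ∘ e.symm)).re := by
      intro w
      have : sesq N w w = sesq M (w ∘ e.symm) (w ∘ e.symm) := sesq_submatrix e M w w
      rw [this, hM, sesq_sub, sesq_one_self]
      simp
    rw [hl] at key
    rw [hNu u, hNu v]
    calc ‖sesq (Nt - N) u v‖ ≤ _ := key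
    _ = _ := by rw [vnormSq_comp_equiv, vnormSq_comp_equiv, Complex.add_re]; ring
  -- nonnegativity of quadratic forms
  have hpos : ∀ w : F ⊕ C → ℂ, 0 ≤ (sesq N w w).re := by
    intro w
    have h1 := hH w w
    have h2 : (0:ℝ) ≤ ‖sesq (Nt - N) w w‖ := norm_nonneg _
    nlinarith
  -- the main estimate
  intro x y
  -- rewrite the goal in terms of S, St
  have hgl : sesq ((1 - schurC M p) - (1 - schurC Mt p)) x y = sesq St x y - sesq S x y := by
    rw [hS, hSt]
    have : (1 - S) - (1 - St) = St - S := by abel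
    rw [this, sesq_sub]
  have hone : ∀ z : C → ℂ, (sesq ((1 : Matrix C C ℂ) - S) z z).re
      = vnormSq z - (sesq S z z).re := by
    intro z
    rw [sesq_sub, sesq_one_self]
    simp
  have hgr : vnormSq x + vnormSq y -
      (sesq (1 - schurC M p) x x + sesq (1 - schurC M p) y y).re
      = (sesq S x x).re + (sesq S y y).re := by
    rw [hS, Complex.add_re, hone, hone]
    ring
  rw [hgl, hgr]
  -- the six auxiliary vectors
  set u : F ⊕ C → ℂ := Sum.elim (-((Aᴴ)⁻¹ *ᵥ (Cmᴴ *ᵥ x))) x with hu_def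
  set u' : F ⊕ C → ℂ := Sum.elim (-((Atᴴ)⁻¹ *ᵥ (Ctᴴ *ᵥ x))) x with hu'_def
  set uy : F ⊕ C → ℂ := Sum.elim (-((Aᴴ)⁻¹ *ᵥ (Cmᴴ *ᵥ y))) y with huy_def
  set v : F ⊕ C → ℂ := Sum.elim (-(At⁻¹ *ᵥ (Bt *ᵥ y))) y with hv_def
  set v' : F ⊕ C → ℂ := Sum.elim (-(A⁻¹ *ᵥ (B *ᵥ y))) y with hv'_def
  set vx : F ⊕ C → ℂ := Sum.elim (-(At⁻¹ *ᵥ (Bt *ᵥ x))) x with hvx_def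
  have hiv : Nt *ᵥ v = Sum.elim (0 : F → ℂ) (St *ᵥ y) := by
    rw [hNtb]; exact mulVec_harmonic At Bt Ct Dt hAt y
  have hivx : Nt *ᵥ vx = Sum.elim (0 : F → ℂ) (St *ᵥ x) := by
    rw [hNtb]; exact mulVec_harmonic At Bt Ct Dt hAt x
  have hiv' : N *ᵥ v' = Sum.elim (0 : F → ℂ) (S *ᵥ y) := by
    rw [hNb]; exact mulVec_harmonic A B Cm D hA y
  have hiu : Nᴴ *ᵥ u = Sum.elim (0 : F → ℂ) (Sᴴ *ᵥ x) := by
    rw [hNb]; exact mulVec_adj_harmonic A B Cm D hA x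
  have hiuy : Nᴴ *ᵥ uy = Sum.elim (0 : F → ℂ) (Sᴴ *ᵥ y) := by
    rw [hNb]; exact mulVec_adj_harmonic A B Cm D hA y
  have hiu' : Ntᴴ *ᵥ u' = Sum.elim (0 : F → ℂ) (Stᴴ *ᵥ x) := by
    rw [hNtb]; exact mulVec_adj_harmonic At Bt Ct Dt hAt x
  -- sesquilinear identities
  have e1 : sesq N u u = sesq S x x := sesq_of_adjoint_image N u S x hiu _ x
  have e2 : sesq N u v = sesq S x y := sesq_of_adjoint_image N u S x hiu _ y
  have e3 : sesq Nt u v = sesq St x y := sesq_of_image Nt v St y hiv _ x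
  have e4 : sesq Nt v v = sesq St y y := sesq_of_image Nt v St y hiv _ y
  have e5 : sesq Nt u' u' = sesq St x x := sesq_of_adjoint_image Nt u' St x hiu' _ x
  have e6 : sesq Nt u' v' = sesq St x y := sesq_of_adjoint_image Nt u' St x hiu' _ y
  have e7 : sesq N u' v' = sesq S x y := sesq_of_image N v' S y hiv' _ x
  have e8 : sesq N v' v' = sesq S y y := sesq_of_image N v' S y hiv' _ y
  have e9 : sesq Nt u vx = sesq St x x := sesq_of_image Nt vx St x hivx _ x
  have e10 : sesq N u vx = sesq S x x := sesq_of_adjoint_image N u S x hiu _ x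
  have e11 : sesq Nt vx vx = sesq St x x := sesq_of_image Nt vx St x hivx _ x
  have e12 : sesq Nt uy v = sesq St y y := sesq_of_image Nt v St y hiv _ y
  have e13 : sesq N uy v = sesq S y y := sesq_of_adjoint_image N uy S y hiuy _ y
  have e14 : sesq N uy uy = sesq S y y := sesq_of_adjoint_image N uy S y hiuy _ y
  -- real quantities
  set a : ℝ := (sesq S x x).re with ha_def
  set b : ℝ := (sesq S y y).re with hb_def
  set at' : ℝ := (sesq St x x).re with hat_def
  set bt' : ℝ := (sesq St y y).re with hbt_def
  set P : ℝ := (sesq N v v).re with hP_def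
  set Q : ℝ := (sesq N u' u').re with hQ_def
  set R : ℝ := (sesq N vx vx).re with hR_def
  set r : ℝ := ‖sesq St x y - sesq S x y‖ with hr_def
  have ha : 0 ≤ a := by rw [ha_def, ← e1]; exact hpos u
  have hb : 0 ≤ b := by rw [hb_def, ← e14]; exact hpos uy
  have hP : 0 ≤ P := hpos v
  have hQ : 0 ≤ Q := hpos u'
  have hR : 0 ≤ R := hpos vx
  -- instances of the hypothesis
  have k1 : r ≤ ε / 2 * (a + P) := by
    have := hH u v; rw [sesq_sub, e2, e3, e1] at this; exact this
  have k2 : r ≤ ε / 2 * (Q + b) := by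
    have := hH u' v'; rw [sesq_sub, e6, e7, e8] at this; exact this
  have habs : ∀ z : ℂ, ∀ c : ℝ, ‖z‖ ≤ c → |z.re| ≤ c := fun z c hz =>
    le_trans (Complex.abs_re_le_norm z) hz
  have k3 : |bt' - P| ≤ ε * P := by
    have := hH v v
    rw [sesq_sub, e4] at this
    have h' := habs _ _ this
    rw [Complex.sub_re] at h'
    calc |bt' - P| = |(sesq St y y).re - (sesq N v v).re| := by rw [hbt_def, hP_def]
    _ ≤ ε / 2 * (P + P) := h'
    _ = ε * P := by ring
  have k4 : |at' - Q| ≤ ε * Q := by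
    have := hH u' u'
    rw [sesq_sub, e5] at this
    have h' := habs _ _ this
    rw [Complex.sub_re] at h'
    calc |at' - Q| = |(sesq St x x).re - (sesq N u' u').re| := by rw [hat_def, hQ_def]
    _ ≤ ε / 2 * (Q + Q) := h'
    _ = ε * Q := by ring
  have k5 : |at' - a| ≤ ε / 2 * (a + R) := by
    have := hH u vx
    rw [sesq_sub, e9, e10, e1] at this
    have h' := habs _ _ this
    rw [Complex.sub_re] at h'
    exact h'
  have k6 : |at' - R| ≤ ε * R := by
    have := hH vx vx
    rw [sesq_sub, e11] at this
    have h' := habs _ _ this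
    rw [Complex.sub_re] at h'
    calc |at' - R| = |(sesq St x x).re - (sesq N vx vx).re| := by rw [hat_def, hR_def]
    _ ≤ ε / 2 * (R + R) := h'
    _ = ε * R := by ring
  have k7 : |bt' - b| ≤ ε / 2 * (b + P) := by
    have := hH uy v
    rw [sesq_sub, e12, e13, e14] at this
    have h' := habs _ _ this
    rw [Complex.sub_re] at h'
    exact h'
  -- real arithmetic
  clear_value a b at' bt' P Q R r
  clear e1 e2 e3 e4 e5 e6 e7 e8 e9 e10 e11 e12 e13 e14 hiv hivx hiv' hiu hiuy hiu' hH hpos hgl hgr hS hSt hA hAt hNb hNtb hW hWt h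
  have hd : 0 < 1 - 3 * ε / 2 := by linarith
  have hde : 0 < 1 - ε := by linarith
  have k3' := abs_le.mp k3
  have k4' := abs_le.mp k4
  have k5' := abs_le.mp k5
  have k6' := abs_le.mp k6
  have k7' := abs_le.mp k7
  have kR : R * (1 - 3 * ε / 2) ≤ (1 + ε / 2) * a := by nlinarith [k5'.2, k6'.1]
  have kQ : Q * (1 - 3 * ε / 2) ≤ (1 + ε / 2) * a := by
    nlinarith [k4'.1, k5'.2, kR, mul_pos hde hd]
  have kP : P * (1 - 3 * ε / 2) ≤ (1 + ε / 2) * b := by nlinarith [k3'.1, k7'.2]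
  have key : r * (2 * (1 - 3 * ε / 2)) ≤ ε * (a + b) := by
    nlinarith [mul_le_mul_of_nonneg_right k1 hd.le, mul_le_mul_of_nonneg_right k2 hd.le,
      mul_le_mul_of_nonneg_left kP (by positivity : (0:ℝ) ≤ ε/2),
      mul_le_mul_of_nonneg_left kQ (by positivity : (0:ℝ) ≤ ε/2),
      mul_nonneg (mul_nonneg h0.le h0.le) (add_nonneg ha hb)]
  have hrw : ε / (1 - 3 * ε / 2) / 2 * (a + b) = ε * (a + b) / (2 * (1 - 3 * ε / 2)) := by
    rw [div_div, div_mul_eq_mul_div, mul_comm (1 - 3 * ε / 2) 2]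
  rw [hrw, le_div_iff₀ (by positivity)]
  exact key

end
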